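/- Let 𝒯 be a Krull–Schmidt, Hom-finite triangulated category over an algebraically closed field k, R a basic rigid object with Γ = End_𝒯(R), and X ∈ pr(R) an object without direct summands in add R[1]. Then the right Γ-module Hom_𝒯(R, X) has projective dimension at most 1 if and only if X(R[1], R[1]) = 0, i.e., every endomorphism of R[1] factoring through add X is zero. -/

import Mathlib

/-!
Formalization of results from "Relative rigid objects in triangulated categories"
by Fu–Geng–Liu.  Throughout, `C` is a Krull–Schmidt, Hom-finite, `k`-linear
triangulated category over an algebraically closed field `k` (Krull–Schmidt is
encoded as: Hom-finite over `k` together with idempotent completeness), with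
suspension functor `⟦1⟧`.
-/

open CategoryTheory Limits Pretriangulated Opposite

universe w v u

namespace RelRigid

variable {k : Type w} [Field k] [IsAlgClosed k]
variable {C : Type u} [Category.{v} C] [Preadditive C] [CategoryTheory.Linear k C]
  [HasZeroObject C] [HasShift C ℤ] [∀ n : ℤ, (shiftFunctor C n).Additive]
  [Pretriangulated C] [HasFiniteBiproducts C] [IsIdempotentComplete C]
  [∀ X Y : C, Module.Finite k (X ⟶ Y)]

/-- `X` belongs to `add R`: it is a direct summand of a finite direct sum of copies of `R`. -/
def InAdd (R X : C) : Prop :=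
  ∃ (n : ℕ) (s : X ⟶ ⨁ (fun _ : Fin n => R)) (p : (⨁ (fun _ : Fin n => R)) ⟶ X),
    s ≫ p = 𝟙 X

/-- `Y` is a direct summand of `X`. -/
def IsSummand (Y X : C) : Prop := ∃ (s : Y ⟶ X) (p : X ⟶ Y), s ≫ p = 𝟙 Y

/-- The morphism `f` factors through `add Z`. -/
def FactorsThroughAdd (Z : C) {X Y : C} (f : X ⟶ Y) : Prop :=
  ∃ (Z' : C) (_ : InAdd Z Z') (g : X ⟶ Z') (h : Z' ⟶ Y), g ≫ h = f

/-- `X` is rigid: `Hom(X, X[1]) = 0`. -/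
def IsRigidObj (X : C) : Prop := ∀ f : X ⟶ X⟦(1 : ℤ)⟧, f = 0

/-- `X` is `R[1]`-rigid: `R[1](X, X[1]) = 0`, i.e. every morphism `X ⟶ X[1]`
factoring through `add (R[1])` vanishes. -/
def IsRelRigid (R X : C) : Prop :=
  ∀ f : X ⟶ X⟦(1 : ℤ)⟧, FactorsThroughAdd (R⟦(1 : ℤ)⟧) f → f = 0

/-- `X ∈ pr(R)`: there is a triangle `R₁ ⟶ R₀ ⟶ X ⟶ R₁[1]` with `R₀, R₁ ∈ add R`. -/
def InPr (R X : C) : Prop :=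
  ∃ (R₁ R₀ : C) (_ : InAdd R R₁) (_ : InAdd R R₀) (f : R₁ ⟶ R₀) (g : R₀ ⟶ X)
    (h : X ⟶ R₁⟦(1 : ℤ)⟧), Triangle.mk f g h ∈ distTriang C

/-- `X` is maximal `R[1]`-rigid with respect to `pr(R)`: `X ∈ pr(R)` is `R[1]`-rigid and
any `Z ∈ pr(R)` with `R[1](X ⊕ Z, (X ⊕ Z)[1]) = 0` satisfies `Z ∈ add X`. -/
def IsMaxRelRigid (R X : C) : Prop :=
  InPr R X ∧ IsRelRigid R X ∧ ∀ Z : C, InPr R Z → IsRelRigid R (X ⊞ Z) → InAdd X Z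

/-- `X` is indecomposable. -/
def Indecomp (X : C) : Prop :=
  ¬ IsZero X ∧ ∀ A B : C, Nonempty (X ≅ A ⊞ B) → IsZero A ∨ IsZero B

/-- `f` is a decomposition of `X` into indecomposable objects. -/
def IsDecomp (X : C) {n : ℕ} (f : Fin n → C) : Prop :=
  (∀ i, Indecomp (f i)) ∧ Nonempty (X ≅ ⨁ f)

/-- `|X| = n`: `X` has exactly `n` pairwise non-isomorphic indecomposable direct summands. -/
def NumIndec (X : C) (n : ℕ) : Prop :=
  ∃ g : Fin n → C, (∀ i, Indecomp (g i)) ∧ (∀ i j : Fin n, Nonempty (g i ≅ g j) → i = j) ∧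
    ∀ Y : C, Indecomp Y → (IsSummand Y X ↔ ∃ i : Fin n, Nonempty (Y ≅ g i))

/-- `X` is basic: it decomposes into pairwise non-isomorphic indecomposable objects. -/
def IsBasic (X : C) : Prop :=
  ∃ (n : ℕ) (f : Fin n → C), IsDecomp X f ∧ ∀ i j : Fin n, Nonempty (f i ≅ f j) → i = j

/-- `Hom(R, Y)` is a left module over `End (op R)` (equivalently, a right module over the
endomorphism algebra `Γ = End R`), via precomposition. -/
instance homModule (R Y : C) : Module (End (op R)) (R ⟶ Y) where
  smul g f := g.unop ≫ f
  one_smul f := by show (1 : End (op R)).unop ≫ f = f; simp [End.one_def]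
  mul_smul g h f := by
    show (g * h).unop ≫ f = g.unop ≫ h.unop ≫ f
    simp [End.mul_def]
  smul_zero g := by show g.unop ≫ (0 : _ ⟶ _) = 0; simp
  smul_add g f₁ f₂ := by
    show g.unop ≫ (f₁ + f₂) = g.unop ≫ f₁ + g.unop ≫ f₂
    simp
  add_smul g h f := by
    show (g + h).unop ≫ f = g.unop ≫ f + h.unop ≫ f
    rw [show (g + h).unop = g.unop + h.unop from rfl, Preadditive.add_comp]
  zero_smul f := by show (0 : End (op R)).unop ≫ f = 0; simp

/-- Postcomposition `Hom(R, X) → Hom(R, Y)` with `φ : X ⟶ Y`, i.e. the action of the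
functor `Hom(R, −)` on morphisms; it is linear over `End (op R)`. -/
def homMap (R : C) {X Y : C} (φ : X ⟶ Y) : (R ⟶ X) →ₗ[End (op R)] (R ⟶ Y) where
  toFun u := u ≫ φ
  map_add' u v := by simp [Preadditive.add_comp]
  map_smul' g u := by
    show (g.unop ≫ u) ≫ φ = g.unop ≫ (u ≫ φ)
    simp [Category.assoc]

/-- `T` is a cluster tilting object:
`add T = {X : Hom(T, X[1]) = 0} = {X : Hom(X, T[1]) = 0}`. -/
def IsClusterTilting (T : C) : Prop :=
  (∀ X : C, InAdd T X ↔ ∀ f : T ⟶ X⟦(1 : ℤ)⟧, f = 0) ∧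
  (∀ X : C, InAdd T X ↔ ∀ f : X ⟶ T⟦(1 : ℤ)⟧, f = 0)

/-- `T` is maximal `R[1]`-rigid with respect to the whole category `C`. -/
def IsMaxRelRigidAll (R T : C) : Prop :=
  IsRelRigid R T ∧ ∀ Z : C, IsRelRigid R (T ⊞ Z) → InAdd T Z

/-- `T` is `R[1]`-cluster tilting: `T` is `R[1]`-rigid and `|T| = |R|`. -/
def IsRelClusterTilting (R T : C) : Prop :=
  IsRelRigid R T ∧ ∃ n : ℕ, NumIndec T n ∧ NumIndec R n

/-- `S` is presilting: `Hom(S, S[i]) = 0` for all `i > 0`. -/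
def IsPresilting (S : C) : Prop := ∀ i : ℤ, 0 < i → ∀ f : S ⟶ S⟦i⟧, f = 0

/-- A predicate on objects defines a thick subcategory: closed under isomorphisms,
shifts, extensions (cones) and direct summands. -/
def IsThickClosed (P : C → Prop) : Prop :=
  (∀ X Y : C, (X ≅ Y) → P X → P Y) ∧
  (∀ (X : C) (n : ℤ), P X → P (X⟦n⟧)) ∧
  (∀ T : Triangle C, T ∈ (distTriang C) → P T.obj₁ → P T.obj₂ → P T.obj₃) ∧
  (∀ X Y : C, IsSummand Y X → P X → P Y)

/-- The smallest thick subcategory of `C` containing `S` is `C` itself. -/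
def ThickGenerates (S : C) : Prop :=
  ∀ P : C → Prop, IsThickClosed P → P S → ∀ X : C, P X

/-- `S` is silting: presilting and `thick S = C`. -/
def IsSilting (S : C) : Prop := IsPresilting S ∧ ThickGenerates S

/-- `C` is `n`-Calabi–Yau: there are bifunctorial isomorphisms
`Hom(X, Y) ≅ D Hom(Y, X[n])`, encoded by a perfect pairing
`Hom(X, Y) × Hom(Y, X[n]) → k` which is natural in both variables. -/
def IsCalabiYau (n : ℤ) : Prop :=
  ∃ pair : ∀ X Y : C, (X ⟶ Y) →ₗ[k] ((Y ⟶ X⟦n⟧) →ₗ[k] k),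
    (∀ X Y : C, Function.Bijective (pair X Y)) ∧
    (∀ (X' X Y : C) (u : X' ⟶ X) (f : X ⟶ Y) (g : Y ⟶ X'⟦n⟧),
      pair X' Y (u ≫ f) g = pair X Y f (g ≫ (shiftFunctor C n).map u)) ∧
    (∀ (X Y Y' : C) (v : Y ⟶ Y') (f : X ⟶ Y) (g : Y' ⟶ X⟦n⟧),
      pair X Y' (f ≫ v) g = pair X Y f (v ≫ g))

/-- `T` is `d`-rigid: `Hom(T, T[i]) = 0` for `i = 1, …, d`. -/
def IsDRigid (d : ℤ) (T : C) : Prop := ∀ i : ℤ, 1 ≤ i → i ≤ d → ∀ f : T ⟶ T⟦i⟧, f = 0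

/-- `T` is maximal `d`-rigid. -/
def IsMaxDRigid (d : ℤ) (T : C) : Prop :=
  IsDRigid d T ∧ ∀ Z : C, IsDRigid d (T ⊞ Z) → InAdd T Z

/-- `T` is a `d`-cluster tilting object. -/
def IsDClusterTilting (d : ℤ) (T : C) : Prop :=
  IsDRigid d T ∧
  ∀ X : C, (∀ i : ℤ, 1 ≤ i → i ≤ d → ∀ f : T ⟶ X⟦i⟧, f = 0) → InAdd T X

/-- `X` is a maximal rigid object. -/
def IsMaxRigidObj (X : C) : Prop :=
  IsRigidObj X ∧ ∀ Z : C, IsRigidObj (X ⊞ Z) → InAdd X Z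

/-- The isomorphism setoid on objects of `C` satisfying a predicate `p`. -/
def objSetoid (p : C → Prop) : Setoid {X : C // p X} where
  r X Y := Nonempty (X.1 ≅ Y.1)
  iseqv := ⟨fun _ => ⟨Iso.refl _⟩, fun ⟨e⟩ => ⟨e.symm⟩, fun ⟨e⟩ ⟨f⟩ => ⟨e.trans f⟩⟩

section Modules

variable (Γ : Type w) [Ring Γ]

/-- `f, g` is a minimal projective presentation `P₁ → P₀ → M → 0`:
both `P`s are projective, the sequence is exact with `g` surjective, and the kernels of
`g` and `f` are superfluous submodules (which encodes minimality). -/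
def IsMinProjPres {P₁ P₀ M : Type w} [AddCommGroup P₁] [Module Γ P₁]
    [AddCommGroup P₀] [Module Γ P₀] [AddCommGroup M] [Module Γ M]
    (f : P₁ →ₗ[Γ] P₀) (g : P₀ →ₗ[Γ] M) : Prop :=
  Module.Projective Γ P₁ ∧ Module.Projective Γ P₀ ∧
  Function.Surjective g ∧ Function.Exact f g ∧
  (∀ K : Submodule Γ P₀, LinearMap.ker g ⊔ K = ⊤ → K = ⊤) ∧
  (∀ K : Submodule Γ P₁, LinearMap.ker f ⊔ K = ⊤ → K = ⊤)

/-- `M` is `τ`-rigid, via the Adachi–Iyama–Reiten criterion: for a minimal projective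
presentation `P₁ →f P₀ → M → 0`, the map `Hom(f, M) : Hom(P₀, M) → Hom(P₁, M)` is
surjective. -/
def IsTauRigid (M : Type w) [AddCommGroup M] [Module Γ M] : Prop :=
  ∀ (P₁ P₀ : Type w) [AddCommGroup P₁] [Module Γ P₁] [AddCommGroup P₀] [Module Γ P₀],
    ∀ (f : P₁ →ₗ[Γ] P₀) (g : P₀ →ₗ[Γ] M), IsMinProjPres Γ f g →
    Function.Surjective (fun h : P₀ →ₗ[Γ] M => h ∘ₗ f)

/-- `(M, P)` is a `τ`-rigid pair: `M ∈ mod Γ` is `τ`-rigid, `P` is finitely generated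
projective and `Hom(P, M) = 0`. -/
def IsTauRigidPair (M P : Type w) [AddCommGroup M] [Module Γ M]
    [AddCommGroup P] [Module Γ P] : Prop :=
  Module.Finite Γ M ∧ IsTauRigid Γ M ∧
  Module.Finite Γ P ∧ Module.Projective Γ P ∧ ∀ h : P →ₗ[Γ] M, h = 0

/-- A module is indecomposable. -/
def ModIndec (M : Type w) [AddCommGroup M] [Module Γ M] : Prop :=
  Nontrivial M ∧ ∀ A B : Submodule Γ M, IsCompl A B → A = ⊥ ∨ B = ⊥

/-- An internal decomposition into indecomposable submodules. -/
def IsModDecomp {M : Type w} [AddCommGroup M] [Module Γ M] {n : ℕ}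
    (f : Fin n → Submodule Γ M) : Prop :=
  DirectSum.IsInternal f ∧ ∀ i, ModIndec Γ (f i)

/-- `|M| = n`: `M` has exactly `n` non-isomorphic indecomposable direct summands. -/
def NumIndecMod (M : Type w) [AddCommGroup M] [Module Γ M] (n : ℕ) : Prop :=
  ∃ (m : ℕ) (f : Fin m → Submodule Γ M) (g : Fin n → Submodule Γ M),
    IsModDecomp Γ f ∧ (∀ i, ModIndec Γ (g i)) ∧
    (∀ i j : Fin n, Nonempty (g i ≃ₗ[Γ] g j) → i = j) ∧
    (∀ i : Fin m, ∃ j : Fin n, Nonempty (f i ≃ₗ[Γ] g j)) ∧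
    (∀ j : Fin n, ∃ i : Fin m, Nonempty (f i ≃ₗ[Γ] g j))

/-- `M` is basic: it decomposes into pairwise non-isomorphic indecomposable submodules. -/
def ModBasic (M : Type w) [AddCommGroup M] [Module Γ M] : Prop :=
  ∃ (n : ℕ) (f : Fin n → Submodule Γ M), IsModDecomp Γ f ∧
    ∀ i j : Fin n, Nonempty (f i ≃ₗ[Γ] f j) → i = j

/-- `(M, P)` is a support `τ`-tilting pair: a `τ`-rigid pair with `|M| + |P| = |Γ|`. -/
def IsSuppTauTiltingPair (M P : Type w) [AddCommGroup M] [Module Γ M]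
    [AddCommGroup P] [Module Γ P] : Prop :=
  IsTauRigidPair Γ M P ∧
  ∃ nM nP nΓ : ℕ, NumIndecMod Γ M nM ∧ NumIndecMod Γ P nP ∧ NumIndecMod Γ Γ nΓ ∧
    nM + nP = nΓ

/-- `M` is a support `τ`-tilting module. -/
def IsSuppTauTilting (M : Type w) [AddCommGroup M] [Module Γ M] : Prop :=
  ∃ P : ModuleCat.{w} Γ, ModBasic Γ P ∧ IsSuppTauTiltingPair Γ M P

/-- `M` has projective dimension at most `1`. -/
def PdLeOne (M : Type w) [AddCommGroup M] [Module Γ M] : Prop :=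
  ∃ (P₁ P₀ : ModuleCat.{w} Γ) (f : P₁ →ₗ[Γ] P₀) (g : ↥P₀ →ₗ[Γ] M),
    Module.Projective Γ P₁ ∧ Module.Projective Γ P₀ ∧
    Function.Injective f ∧ Function.Surjective g ∧ Function.Exact f g

/-- `Ext¹_Γ(M, M) = 0`: every self-extension of `M` splits. -/
def SelfExtSplit (M : Type w) [AddCommGroup M] [Module Γ M] : Prop :=
  ∀ (E : ModuleCat.{w} Γ) (i : M →ₗ[Γ] E) (p : ↥E →ₗ[Γ] M),
    Function.Injective i → Function.Surjective p → Function.Exact i p →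
    ∃ r : ↥E →ₗ[Γ] M, r ∘ₗ i = LinearMap.id

/-- `M` is a (basic) tilting module: `M ∈ mod Γ` is basic with `pd M ≤ 1`,
`Ext¹(M, M) = 0` and `|M| = |Γ|`. -/
def IsTiltingMod (M : Type w) [AddCommGroup M] [Module Γ M] : Prop :=
  Module.Finite Γ M ∧ ModBasic Γ M ∧ PdLeOne Γ M ∧ SelfExtSplit Γ M ∧
  ∃ n : ℕ, NumIndecMod Γ M n ∧ NumIndecMod Γ Γ n

/-- The linear-isomorphism setoid on modules satisfying a predicate `p`. -/
def modSetoid (p : ModuleCat.{w} Γ → Prop) : Setoid {M : ModuleCat.{w} Γ // p M} where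
  r M N := Nonempty (↥M.1 ≃ₗ[Γ] ↥N.1)
  iseqv := ⟨fun _ => ⟨LinearEquiv.refl Γ _⟩, fun ⟨e⟩ => ⟨e.symm⟩, fun ⟨e⟩ ⟨f⟩ => ⟨e.trans f⟩⟩

/-- The componentwise linear-isomorphism setoid on pairs of modules satisfying `p`. -/
def pairSetoid (p : ModuleCat.{w} Γ × ModuleCat.{w} Γ → Prop) :
    Setoid {Mp : ModuleCat.{w} Γ × ModuleCat.{w} Γ // p Mp} where
  r A B := Nonempty (↥A.1.1 ≃ₗ[Γ] ↥B.1.1) ∧ Nonempty (↥A.1.2 ≃ₗ[Γ] ↥B.1.2)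
  iseqv := ⟨fun _ => ⟨⟨LinearEquiv.refl Γ _⟩, ⟨LinearEquiv.refl Γ _⟩⟩,
    fun ⟨⟨e⟩, ⟨f⟩⟩ => ⟨⟨e.symm⟩, ⟨f.symm⟩⟩,
    fun ⟨⟨e⟩, ⟨f⟩⟩ ⟨⟨e'⟩, ⟨f'⟩⟩ => ⟨⟨e.trans e'⟩, ⟨f.trans f'⟩⟩⟩

/-- `(M, P)` is a basic `τ`-rigid pair. -/
def BasicTauRigidPair (Mp : ModuleCat.{w} Γ × ModuleCat.{w} Γ) : Prop :=
  IsTauRigidPair Γ ↥Mp.1 ↥Mp.2 ∧ ModBasic Γ ↥Mp.1 ∧ ModBasic Γ ↥Mp.2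

end Modules

section SchanuelAux

variable {A : Type*} [Ring A] {P₁ P₀ Q₁ Q₀ M : Type*}
    [AddCommGroup P₁] [Module A P₁] [AddCommGroup P₀] [Module A P₀]
    [AddCommGroup Q₁] [Module A Q₁] [AddCommGroup Q₀] [Module A Q₀]
    [AddCommGroup M] [Module A M]

/-- A Schanuel-type lemma: if `M` admits a projective presentation
`P₁ →φ P₀ →ψ M → 0` and a length-one projective resolution
`0 → Q₁ →i Q₀ →g M → 0`, then `ker φ` is a direct summand of `P₁`;
we record this via a linear map `e` which is the identity on `ker φ`
and has image inside `ker φ`. -/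
theorem schanuel_ker_split
    (hP₀ : Module.Projective A P₀) (hQ₁ : Module.Projective A Q₁)
    (hQ₀ : Module.Projective A Q₀)
    (φ : P₁ →ₗ[A] P₀) (ψ : P₀ →ₗ[A] M) (hψ : Function.Surjective ψ)
    (hPex : Function.Exact φ ψ)
    (i : Q₁ →ₗ[A] Q₀) (g : Q₀ →ₗ[A] M) (hiInj : Function.Injective i)
    (hg : Function.Surjective g) (hQex : Function.Exact i g) :
    ∃ e : P₁ →ₗ[A] P₁, (∀ x, φ (e x) = 0) ∧ ∀ x, φ x = 0 → e x = x := by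
  haveI := hP₀; haveI := hQ₁; haveI := hQ₀
  classical
  set σ : P₀ × Q₀ →ₗ[A] M :=
    ψ.comp (LinearMap.fst A P₀ Q₀) - g.comp (LinearMap.snd A P₀ Q₀) with hσ
  set N : Submodule A (P₀ × Q₀) := LinearMap.ker σ with hN
  have memN : ∀ p q, (p, q) ∈ N ↔ ψ p = g q := by
    intro p q
    simp [hN, hσ, LinearMap.mem_ker, sub_eq_zero]
  set fstN : N →ₗ[A] P₀ := (LinearMap.fst A P₀ Q₀).comp N.subtype with hfstN
  set sndN : N →ₗ[A] Q₀ := (LinearMap.snd A P₀ Q₀).comp N.subtype with hsndN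
  have hrel : ∀ x : N, ψ (fstN x) = g (sndN x) := fun x => (memN _ _).mp x.2
  have hfstNsurj : Function.Surjective fstN := by
    intro p
    obtain ⟨q, hq⟩ := hg (ψ p)
    exact ⟨⟨(p, q), (memN p q).mpr hq.symm⟩, rfl⟩
  have hsndNsurj : Function.Surjective sndN := by
    intro q
    obtain ⟨p, hp⟩ := hψ (g q)
    exact ⟨⟨(p, q), (memN p q).mpr hp⟩, rfl⟩
  -- N is projective
  have projN : Module.Projective A N := by
    obtain ⟨t, ht⟩ := Module.projective_lifting_property fstN LinearMap.id hfstNsurj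
    have htapp : ∀ p, fstN (t p) = p := fun p => congrArg (fun F => F p) (congrArg DFunLike.coe ht)
    set d : N →ₗ[A] Q₀ := sndN - sndN.comp (t.comp fstN) with hd
    have hdmem : ∀ x, d x ∈ LinearMap.range i := by
      intro x
      rw [(LinearMap.exact_iff.mp hQex).symm, LinearMap.mem_ker]
      have : g (d x) = g (sndN x) - g (sndN (t (fstN x))) := by
        simp [hd, map_sub]
      rw [this, ← hrel x, ← hrel (t (fstN x)), htapp (fstN x)]
      exact sub_self _
    set ei := LinearEquiv.ofInjective i hiInj with hei
    set ρ : N →ₗ[A] Q₁ :=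
      (ei.symm.toLinearMap).comp (d.codRestrict (LinearMap.range i) hdmem) with hρ
    have hiρ : ∀ x, i (ρ x) = d x := by
      intro x
      have := LinearEquiv.ofInjective_symm_apply (f := i) (h := hiInj)
        ⟨d x, hdmem x⟩
      simpa [hρ, hei] using this
    set ι2 : Q₁ →ₗ[A] N :=
      ((LinearMap.inr A P₀ Q₀).comp i).codRestrict N
        (fun a => (memN 0 (i a)).mpr (by rw [map_zero, hQex.apply_apply_eq_zero])) with hι2
    set α : N →ₗ[A] Q₁ × P₀ := LinearMap.prod ρ fstN with hα
    set β : Q₁ × P₀ →ₗ[A] N :=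
      ι2.comp (LinearMap.fst A Q₁ P₀) + t.comp (LinearMap.snd A Q₁ P₀) with hβ
    refine Module.Projective.of_split α β ?_
    refine LinearMap.ext fun x => ?_
    have hval : ((β.comp α) x : P₀ × Q₀) = (x : P₀ × Q₀) := by
      have h1 : ((β.comp α) x : P₀ × Q₀) =
          ((0 : P₀), i (ρ x)) + ((t (fstN x) : N) : P₀ × Q₀) := by
        simp [hβ, hα, hι2, LinearMap.codRestrict]
      rw [h1, hiρ]
      have hfst : ((t (fstN x) : N) : P₀ × Q₀).1 = (x : P₀ × Q₀).1 := htapp (fstN x)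
      have hsnd2 : ((t (fstN x) : N) : P₀ × Q₀).2 = sndN (t (fstN x)) := rfl
      have : d x = (x : P₀ × Q₀).2 - sndN (t (fstN x)) := by simp [hd]; rfl
      rw [this]
      ext
      · simpa using hfst
      · simp [hsnd2]
    apply Subtype.ext
    exact hval
  -- ker ψ is projective
  haveI := projN
  have projW : Module.Projective A (LinearMap.ker ψ) := by
    obtain ⟨u, hu⟩ := Module.projective_lifting_property sndN LinearMap.id hsndNsurj
    have huapp : ∀ q, sndN (u q) = q := fun q => congrArg (fun F => F q) (congrArg DFunLike.coe hu)
    set γ0 : N →ₗ[A] P₀ := fstN - fstN.comp (u.comp sndN) with hγ0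
    have hγ0mem : ∀ x, γ0 x ∈ LinearMap.ker ψ := by
      intro x
      rw [LinearMap.mem_ker]
      have : ψ (γ0 x) = ψ (fstN x) - ψ (fstN (u (sndN x))) := by simp [hγ0, map_sub]
      rw [this, hrel, hrel (u (sndN x)), huapp]
      exact sub_self _
    set γ : N →ₗ[A] LinearMap.ker ψ := γ0.codRestrict _ hγ0mem with hγ
    set ιW : LinearMap.ker ψ →ₗ[A] N :=
      ((LinearMap.inl A P₀ Q₀).comp (LinearMap.ker ψ).subtype).codRestrict N
        (fun w => (memN (w : P₀) 0).mpr (by rw [map_zero]; exact w.2)) with hιW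
    refine Module.Projective.of_split ιW γ ?_
    refine LinearMap.ext fun w => ?_
    have : γ0 (ιW w) = (w : P₀) := by
      have h1 : fstN (ιW w) = (w : P₀) := rfl
      have h2 : sndN (ιW w) = 0 := rfl
      simp [hγ0, h1, h2]
    apply Subtype.ext
    exact this
  -- conclude
  haveI := projW
  set φW : P₁ →ₗ[A] LinearMap.ker ψ :=
    φ.codRestrict _ (fun x => by
      rw [LinearMap.mem_ker]; exact hPex.apply_apply_eq_zero x) with hφW
  have hφWsurj : Function.Surjective φW := by
    rintro ⟨w, hw⟩
    obtain ⟨x, hx⟩ := (hPex w).mp (by simpa [LinearMap.mem_ker] using hw)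
    exact ⟨x, Subtype.ext hx⟩
  obtain ⟨s, hs⟩ := Module.projective_lifting_property φW LinearMap.id hφWsurj
  have hsapp : ∀ w, φW (s w) = w := fun w => congrArg (fun F => F w) (congrArg DFunLike.coe hs)
  refine ⟨LinearMap.id - s.comp φW, fun x => ?_, fun x hx => ?_⟩
  · have h1 : ((LinearMap.id : P₁ →ₗ[A] P₁) - s.comp φW) x = x - s (φW x) := rfl
    have h2 : φ (s (φW x)) = ((φW (s (φW x)) : LinearMap.ker ψ) : P₀) := rfl
    rw [h1, map_sub, h2, hsapp]
    exact sub_self (φ x)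
  · have hWx : φW x = 0 := by
      apply Subtype.ext
      exact hx
    have h1 : ((LinearMap.id : P₁ →ₗ[A] P₁) - s.comp φW) x = x - s (φW x) := rfl
    rw [h1, hWx, map_zero, sub_zero]

end SchanuelAux

section Aux

variable {k : Type w} [Field k] [IsAlgClosed k]
variable {C : Type u} [Category.{v} C] [Preadditive C] [CategoryTheory.Linear k C]
  [HasZeroObject C] [HasShift C ℤ] [∀ n : ℤ, (shiftFunctor C n).Additive]
  [Pretriangulated C] [HasFiniteBiproducts C] [IsIdempotentComplete C]
  [∀ X Y : C, Module.Finite k (X ⟶ Y)]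

lemma inAdd_self (X : C) : InAdd X X :=
  ⟨1, biproduct.lift fun _ => 𝟙 X, biproduct.π _ 0, by simp⟩

lemma smul_eq_unop_comp {R Y : C} (g : End (op R)) (u : R ⟶ Y) :
    g • u = g.unop ≫ u := rfl

/-- The shift of an object of `add R` lies in `add R⟦1⟧`. -/
lemma inAdd_shift {R A : C} (hA : InAdd R A) : InAdd (R⟦(1 : ℤ)⟧) (A⟦(1 : ℤ)⟧) := by
  obtain ⟨n, s, p, hsp⟩ := hA
  let I : ((⨁ fun _ : Fin n => R) : C)⟦(1 : ℤ)⟧ ≅ ⨁ fun _ : Fin n => (R⟦(1 : ℤ)⟧ : C) :=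
    (shiftFunctor C (1 : ℤ)).mapBiproduct _ ≪≫ biproduct.mapIso fun _ => Iso.refl _
  refine ⟨n, s⟦(1 : ℤ)⟧' ≫ I.hom, I.inv ≫ p⟦(1 : ℤ)⟧', ?_⟩
  have h1 : (s⟦(1 : ℤ)⟧' ≫ I.hom) ≫ I.inv ≫ p⟦(1 : ℤ)⟧' = s⟦(1 : ℤ)⟧' ≫ p⟦(1 : ℤ)⟧' := by
    simp
  rw [h1, ← CategoryTheory.Functor.map_comp, hsp, CategoryTheory.Functor.map_id]

/-- Any map `R ⟶ A⟦1⟧` with `A ∈ add R` vanishes when `R` is rigid. -/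
lemma hom_R_to_add_shift {R A : C} (hR : IsRigidObj R) (hA : InAdd R A)
    (u : R ⟶ A⟦(1 : ℤ)⟧) : u = 0 := by
  obtain ⟨n, s, p, hsp⟩ := hA
  let I : ((⨁ fun _ : Fin n => R) : C)⟦(1 : ℤ)⟧ ≅ ⨁ fun _ : Fin n => (R⟦(1 : ℤ)⟧ : C) :=
    (shiftFunctor C (1 : ℤ)).mapBiproduct _ ≪≫ biproduct.mapIso fun _ => Iso.refl _
  have h0 : (u ≫ s⟦(1 : ℤ)⟧') ≫ I.hom = 0 := by
    apply biproduct.hom_ext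
    intro i
    simp only [Category.assoc, zero_comp]
    exact hR _
  have h1 : u ≫ s⟦(1 : ℤ)⟧' = 0 := by
    have := h0 =≫ I.inv
    simpa using this
  calc u = u ≫ (s ≫ p)⟦(1 : ℤ)⟧' := by rw [hsp, CategoryTheory.Functor.map_id, Category.comp_id]
    _ = (u ≫ s⟦(1 : ℤ)⟧') ≫ p⟦(1 : ℤ)⟧' := by rw [CategoryTheory.Functor.map_comp, Category.assoc]
    _ = 0 := by rw [h1, zero_comp]

/-- Any map `A ⟶ R⟦1⟧` with `A ∈ add R` vanishes when `R` is rigid. -/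
lemma hom_add_to_Rshift {R A : C} (hR : IsRigidObj R) (hA : InAdd R A)
    (u : A ⟶ R⟦(1 : ℤ)⟧) : u = 0 := by
  obtain ⟨n, s, p, hsp⟩ := hA
  have h0 : p ≫ u = 0 := by
    apply biproduct.hom_ext'
    intro i
    rw [← Category.assoc, comp_zero]
    exact hR _
  calc u = (s ≫ p) ≫ u := by rw [hsp, Category.id_comp]
    _ = s ≫ (p ≫ u) := Category.assoc _ _ _
    _ = 0 := by rw [h0, comp_zero]

/-- A map out of an object of `add R` vanishing after all precompositions `R ⟶ A` is zero. -/
lemma hom_ext_from_add {R A Y : C} (hA : InAdd R A) (w : A ⟶ Y)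
    (hw : ∀ u : R ⟶ A, u ≫ w = 0) : w = 0 := by
  obtain ⟨n, s, p, hsp⟩ := hA
  have h0 : p ≫ w = 0 := by
    apply biproduct.hom_ext'
    intro i
    rw [← Category.assoc, comp_zero]
    exact hw _
  calc w = (s ≫ p) ≫ w := by rw [hsp, Category.id_comp]
    _ = s ≫ (p ≫ w) := Category.assoc _ _ _
    _ = 0 := by rw [h0, comp_zero]

lemma hom_eq_from_add {R A Y : C} (hA : InAdd R A) (α β : A ⟶ Y)
    (hw : ∀ u : R ⟶ A, u ≫ α = u ≫ β) : α = β := by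
  have := hom_ext_from_add hA (α - β) (fun u => by
    rw [Preadditive.comp_sub, hw u, sub_self])
  rwa [sub_eq_zero] at this

/-- Every `Γ`-linear endomorphism of `Hom(R, A)` for `A ∈ add R` is induced by an
endomorphism of `A`. -/
lemma exists_eps {R A : C} (hA : InAdd R A)
    (e : (R ⟶ A) →ₗ[End (op R)] (R ⟶ A)) :
    ∃ ε : A ⟶ A, ∀ u : R ⟶ A, e u = u ≫ ε := by
  obtain ⟨n, s, p, hsp⟩ := hA
  have key : ∀ (v : R ⟶ R) (x : R ⟶ A), e (v ≫ x) = v ≫ e x := by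
    intro v x
    have := e.map_smul (op v) x
    simpa [smul_eq_unop_comp] using this
  refine ⟨s ≫ biproduct.desc (fun i => e (biproduct.ι (fun _ : Fin n => R) i ≫ p)), ?_⟩
  intro u
  have htot : u ≫ s = ∑ i : Fin n,
      (u ≫ s ≫ biproduct.π (fun _ : Fin n => R) i) ≫ biproduct.ι (fun _ : Fin n => R) i := by
    conv_lhs => rw [← Category.comp_id (u ≫ s), ← biproduct.total]
    rw [Preadditive.comp_sum]
    exact Finset.sum_congr rfl fun i _ => by rw [← Category.assoc, ← Category.assoc]
  have : u ≫ s ≫ biproduct.desc (fun i => e (biproduct.ι (fun _ : Fin n => R) i ≫ p)) =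
      ∑ i : Fin n, (u ≫ s ≫ biproduct.π (fun _ : Fin n => R) i) ≫
        e (biproduct.ι (fun _ : Fin n => R) i ≫ p) := by
    rw [← Category.assoc, htot, Preadditive.sum_comp]
    exact Finset.sum_congr rfl fun i _ => by rw [Category.assoc, biproduct.ι_desc]
  rw [this]
  have : ∀ i : Fin n, (u ≫ s ≫ biproduct.π (fun _ : Fin n => R) i) ≫
      e (biproduct.ι (fun _ : Fin n => R) i ≫ p) =
      e ((u ≫ s ≫ biproduct.π (fun _ : Fin n => R) i) ≫
        (biproduct.ι (fun _ : Fin n => R) i ≫ p)) := fun i => (key _ _).symm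
  rw [Finset.sum_congr rfl fun i _ => this i, ← map_sum]
  congr 1
  have : ∑ i : Fin n, (u ≫ s ≫ biproduct.π (fun _ : Fin n => R) i) ≫
      (biproduct.ι (fun _ : Fin n => R) i ≫ p) = (u ≫ s) ≫ p := by
    conv_rhs => rw [htot]
    rw [Preadditive.sum_comp]
    exact Finset.sum_congr rfl fun i _ => by simp only [Category.assoc]
  rw [this, Category.assoc, hsp, Category.comp_id]

/-- `Hom(R, A)` is a projective `Γ`-module for `A ∈ add R`. -/
lemma projective_hom_of_inAdd {R A : C} (hA : InAdd R A) :
    Module.Projective (End (op R)) (R ⟶ A) := by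
  obtain ⟨n, s, p, hsp⟩ := hA
  let E : (R ⟶ (⨁ fun _ : Fin n => R : C)) ≃ₗ[End (op R)] (Fin n → End (op R)) :=
  { toFun := fun u i => ((u ≫ biproduct.π (fun _ : Fin n => R) i).op : End (op R))
    map_add' := fun u v => by
      funext i
      show ((u + v) ≫ biproduct.π (fun _ : Fin n => R) i).op =
        ((u ≫ biproduct.π (fun _ : Fin n => R) i).op : End (op R)) +
          (v ≫ biproduct.π (fun _ : Fin n => R) i).op
      rw [Preadditive.add_comp]
      rfl
    map_smul' := fun c u => by
      funext i
      show ((c.unop ≫ u) ≫ biproduct.π (fun _ : Fin n => R) i).op = _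
      rw [Category.assoc]
      rfl
    invFun := fun v => biproduct.lift fun i => (v i).unop
    left_inv := fun u => by
      apply biproduct.hom_ext
      intro i
      simp
    right_inv := fun v => by
      funext i
      simp }
  haveI : Module.Projective (End (op R)) (R ⟶ (⨁ fun _ : Fin n => R : C)) :=
    Module.Projective.of_equiv E.symm
  refine Module.Projective.of_split (homMap R s) (homMap R p) ?_
  ext u
  show (u ≫ s) ≫ p = u
  rw [Category.assoc, hsp, Category.comp_id]

end Aux

section KeyVanish

variable {k : Type w} [Field k] [IsAlgClosed k]
variable {C : Type u} [Category.{v} C] [Preadditive C] [CategoryTheory.Linear k C]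
  [HasZeroObject C] [HasShift C ℤ] [∀ n : ℤ, (shiftFunctor C n).Additive]
  [Pretriangulated C] [HasFiniteBiproducts C] [IsIdempotentComplete C]
  [∀ X Y : C, Module.Finite k (X ⟶ Y)]

lemma key_vanish {R X A : C}
    (Hfac : ∀ f : R⟦(1 : ℤ)⟧ ⟶ R⟦(1 : ℤ)⟧, FactorsThroughAdd X f → f = 0)
    (hA : InAdd R A) (w : R⟦(1 : ℤ)⟧ ⟶ X) (h' : X ⟶ A⟦(1 : ℤ)⟧) : w ≫ h' = 0 := by
  obtain ⟨n, s, p, hsp⟩ := hA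
  let I : ((⨁ fun _ : Fin n => R) : C)⟦(1 : ℤ)⟧ ≅ ⨁ fun _ : Fin n => (R⟦(1 : ℤ)⟧ : C) :=
    (shiftFunctor C (1 : ℤ)).mapBiproduct _ ≪≫ biproduct.mapIso fun _ => Iso.refl _
  have h0 : ((w ≫ h') ≫ s⟦(1 : ℤ)⟧') ≫ I.hom = 0 := by
    apply biproduct.hom_ext
    intro i
    simp only [Category.assoc, zero_comp]
    exact Hfac _ ⟨X, inAdd_self X, w,
      h' ≫ s⟦(1 : ℤ)⟧' ≫ I.hom ≫ biproduct.π _ i, rfl⟩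
  have h1 : (w ≫ h') ≫ s⟦(1 : ℤ)⟧' = 0 := by
    have := h0 =≫ I.inv
    simpa using this
  have h2 : w ≫ h' = ((w ≫ h') ≫ s⟦(1 : ℤ)⟧') ≫ p⟦(1 : ℤ)⟧' := by
    rw [Category.assoc, ← CategoryTheory.Functor.map_comp, hsp, CategoryTheory.Functor.map_id, Category.comp_id]
  rw [h2, h1, zero_comp]

end KeyVanish


/-- **Theorem 2.8, first part.**  Let `R` be a basic rigid object, `Γ = End R`, and
`X ∈ pr(R)` without direct summands in `add (R[1])`.  Then `pd_Γ Hom(R, X) ≤ 1` if and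
only if `X(R[1], R[1]) = 0`. -/
theorem statement9 (R : C) (hRbasic : IsBasic R) (hRrigid : IsRigidObj R)
    (X : C) (hX : InPr R X)
    (hXs : ∀ Y : C, IsSummand Y X → InAdd (R⟦(1 : ℤ)⟧) Y → IsZero Y) :
    PdLeOne (End (op R)) (R ⟶ X) ↔
      ∀ f : R⟦(1 : ℤ)⟧ ⟶ R⟦(1 : ℤ)⟧, FactorsThroughAdd X f → f = 0 := by
  obtain ⟨R₁, R₀, hR₁, hR₀, tf, tg, th, hT⟩ := hX
  -- `Hom(R, -)` applied to the triangle gives a projective presentation of `Hom(R, X)`.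
  have hψsurj : Function.Surjective (homMap R (X := R₀) (Y := X) tg) := by
    intro u
    have hu : u ≫ (Triangle.mk tf tg th).mor₃ = 0 :=
      hom_R_to_add_shift hRrigid hR₁ (u ≫ th)
    obtain ⟨v, hv⟩ := Triangle.coyoneda_exact₃ _ hT u hu
    exact ⟨v, hv.symm⟩
  have hexact : Function.Exact (homMap R (X := R₁) (Y := R₀) tf)
      (homMap R (X := R₀) (Y := X) tg) := by
    intro u
    constructor
    · intro hu
      obtain ⟨v, hv⟩ := Triangle.coyoneda_exact₂ _ hT u hu
      exact ⟨v, hv.symm⟩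
    · rintro ⟨v, rfl⟩
      show (v ≫ tf) ≫ tg = 0
      have h12 : tf ≫ tg = 0 := comp_distTriang_mor_zero₁₂ _ hT
      rw [Category.assoc, h12, comp_zero]
  constructor
  · -- pd ≤ 1 implies the factorization condition
    rintro ⟨Q₁, Q₀, iQ, gQ, hQ₁, hQ₀, hiInj, hgSurj, hQex⟩
    -- Step 1: the kernel of `Hom(R, tf)` is trivial.
    obtain ⟨e, he1, he2⟩ := schanuel_ker_split (projective_hom_of_inAdd hR₀) hQ₁ hQ₀
      (homMap R tf) (homMap R tg) hψsurj hexact iQ gQ hiInj hgSurj hQex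
    obtain ⟨ε, hε⟩ := exists_eps hR₁ e
    have hεf : ε ≫ tf = 0 := by
      apply hom_ext_from_add hR₁
      intro u
      rw [← Category.assoc, ← hε u]
      exact he1 u
    have hεidem : ε ≫ ε = ε := by
      apply hom_eq_from_add hR₁
      intro u
      calc u ≫ ε ≫ ε = (u ≫ ε) ≫ ε := (Category.assoc u ε ε).symm
        _ = e (u ≫ ε) := (hε (u ≫ ε)).symm
        _ = e (e u) := by rw [← hε u]
        _ = e u := he2 (e u) (he1 u)
        _ = u ≫ ε := hε u
    obtain ⟨R', j, q, hjq, hqj⟩ := IsIdempotentComplete.idempotents_split R₁ ε hεidem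
    have hjf : j ≫ tf = 0 := by
      calc j ≫ tf = (j ≫ q) ≫ j ≫ tf := by rw [hjq, Category.id_comp]
        _ = j ≫ (q ≫ j) ≫ tf := by simp only [Category.assoc]
        _ = j ≫ ε ≫ tf := by rw [hqj]
        _ = 0 := by rw [hεf, comp_zero]
    have hT' := inv_rot_of_distTriang _ hT
    obtain ⟨j', hj'⟩ := Triangle.coyoneda_exact₂ _ hT' j hjf
    set δ := (Triangle.mk tf tg th).invRotate.mor₁ with hδ
    have hsplit : j' ≫ δ ≫ q = 𝟙 R' := by
      exact (Category.assoc j' δ q).symm.trans (by rw [← hj']; exact hjq)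
    -- `R'⟦1⟧` is a direct summand of `X` belonging to `add R⟦1⟧`, hence zero.
    let E := (shiftFunctorCompIsoId C (-1 : ℤ) (1 : ℤ) (by norm_num)).app X
    have hsummand : IsSummand (R'⟦(1 : ℤ)⟧) X := by
      refine ⟨j'⟦(1 : ℤ)⟧' ≫ E.hom, E.inv ≫ (δ ≫ q)⟦(1 : ℤ)⟧', ?_⟩
      have h1 : (j'⟦(1 : ℤ)⟧' ≫ E.hom) ≫ E.inv ≫ (δ ≫ q)⟦(1 : ℤ)⟧' =
          j'⟦(1 : ℤ)⟧' ≫ (δ ≫ q)⟦(1 : ℤ)⟧' := by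
        exact (Category.assoc _ _ _).trans
          (congrArg (fun t => j'⟦(1 : ℤ)⟧' ≫ t) (E.hom_inv_id_assoc _))
      rw [h1, ← CategoryTheory.Functor.map_comp]
      have h2 : j' ≫ δ ≫ q = 𝟙 R' := hsplit
      rw [h2, CategoryTheory.Functor.map_id]
    have hR'add : InAdd R R' := by
      obtain ⟨n, s, p, hsp⟩ := hR₁
      refine ⟨n, j ≫ s, p ≫ q, ?_⟩
      rw [Category.assoc, ← Category.assoc s p, hsp, Category.id_comp, hjq]
    have hz : IsZero (R'⟦(1 : ℤ)⟧) := hXs _ hsummand (inAdd_shift hR'add)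
    have hR'id : (𝟙 R' : R' ⟶ R') = 0 := by
      apply (shiftFunctor C (1 : ℤ)).map_injective
      rw [CategoryTheory.Functor.map_id, CategoryTheory.Functor.map_zero]
      exact hz.eq_of_src _ _
    have hε0 : ε = 0 := by
      rw [← hqj, ← Category.id_comp j, hR'id, zero_comp, comp_zero]
    have hker : ∀ u : R ⟶ R₁, u ≫ tf = 0 → u = 0 := by
      intro u hu
      rw [← he2 u hu, hε u, hε0, comp_zero]
    -- Step 2: any map `R⟦1⟧ ⟶ R⟦1⟧` factoring through `add X` vanishes.
    rintro m ⟨X', hX', a, b, hab⟩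
    obtain ⟨nX, σ, τ, hστ⟩ := hX'
    have hterm : ∀ i : Fin nX,
        (a ≫ σ ≫ biproduct.π (fun _ : Fin nX => X) i) ≫
          biproduct.ι (fun _ : Fin nX => X) i ≫ τ ≫ b = 0 := by
      intro i
      set aᵢ := a ≫ σ ≫ biproduct.π (fun _ : Fin nX => X) i with haᵢ
      set bᵢ := biproduct.ι (fun _ : Fin nX => X) i ≫ τ ≫ b with hbᵢ
      have hgb : (Triangle.mk tf tg th).mor₂ ≫ bᵢ = 0 :=
        hom_add_to_Rshift hRrigid hR₀ (tg ≫ bᵢ)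
      obtain ⟨d, hd⟩ := Triangle.yoneda_exact₃ _ hT bᵢ hgb
      have hd' : bᵢ = th ≫ d := hd
      obtain ⟨wmap, hw⟩ := (shiftFunctor C (1 : ℤ)).map_surjective (aᵢ ≫ th)
      have h31 : th ≫ tf⟦(1 : ℤ)⟧' = 0 := comp_distTriang_mor_zero₃₁ _ hT
      have hwf : wmap ≫ tf = 0 := by
        apply (shiftFunctor C (1 : ℤ)).map_injective
        rw [CategoryTheory.Functor.map_comp, hw, CategoryTheory.Functor.map_zero, Category.assoc, h31, comp_zero]
      have hath : aᵢ ≫ th = 0 := by rw [← hw, hker wmap hwf, CategoryTheory.Functor.map_zero]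
      show aᵢ ≫ bᵢ = 0
      rw [hd']
      exact (Category.assoc aᵢ th d).symm.trans (by rw [hath]; exact zero_comp)
    have h2 : σ ≫ τ ≫ b = b := by rw [← Category.assoc, hστ, Category.id_comp]
    have expand : a ≫ b = ∑ i : Fin nX,
        (a ≫ σ ≫ biproduct.π (fun _ : Fin nX => X) i) ≫
          biproduct.ι (fun _ : Fin nX => X) i ≫ τ ≫ b := by
      calc a ≫ b = a ≫ σ ≫ (∑ i : Fin nX, biproduct.π (fun _ : Fin nX => X) i ≫
            biproduct.ι (fun _ : Fin nX => X) i) ≫ τ ≫ b := by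
            rw [biproduct.total, Category.id_comp, h2]
        _ = _ := by
            rw [Preadditive.sum_comp, Preadditive.comp_sum, Preadditive.comp_sum]
            exact Finset.sum_congr rfl fun i _ => by simp only [Category.assoc]
    rw [← hab, expand]
    exact Finset.sum_eq_zero fun i _ => hterm i
  · -- the factorization condition implies pd ≤ 1
    intro Hfac
    refine ⟨ModuleCat.of (End (op R)) (R ⟶ R₁), ModuleCat.of (End (op R)) (R ⟶ R₀),
      homMap R tf, homMap R tg, projective_hom_of_inAdd hR₁, projective_hom_of_inAdd hR₀,
      ?_, hψsurj, hexact⟩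
    have hker : ∀ u : R ⟶ R₁, u ≫ tf = 0 → u = 0 := by
      intro u hu
      have h1 : u⟦(1 : ℤ)⟧' ≫ (Triangle.mk tf tg th).rotate.mor₃ = 0 := by
        show u⟦(1 : ℤ)⟧' ≫ (-tf⟦(1 : ℤ)⟧') = 0
        rw [Preadditive.comp_neg, ← CategoryTheory.Functor.map_comp, hu, CategoryTheory.Functor.map_zero, neg_zero]
      obtain ⟨wmap, hwmap⟩ := Triangle.coyoneda_exact₃ _ (rot_of_distTriang _ hT)
        (u⟦(1 : ℤ)⟧' : R⟦(1 : ℤ)⟧ ⟶ (Triangle.mk tf tg th).rotate.obj₃) h1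
      have hwz : wmap ≫ (Triangle.mk tf tg th).rotate.mor₂ = 0 :=
        key_vanish Hfac hR₁ wmap ((Triangle.mk tf tg th).rotate.mor₂)
      apply (shiftFunctor C (1 : ℤ)).map_injective
      rw [CategoryTheory.Functor.map_zero]
      exact hwmap.trans hwz
    intro x y hxy
    have h1 : (x - y) ≫ tf = 0 := by
      rw [Preadditive.sub_comp]
      have : x ≫ tf = y ≫ tf := hxy
      rw [this, sub_self]
    have := hker _ h1
    rwa [sub_eq_zero] at this

end RelRigid
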